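/- Let f be measurable with tail function satisfying T(f,u) ≤ C₁|log u|^γ·u^{-a} for 0 < u ≤ 1/2 and T(f,u) ≤ C₂(log u)^τ·u^{-b} for u ≥ 2, where 1 ≤ a < b < ∞ and γ,τ ≥ 0. Then f ∈ G(a,b; γ+1, τ+1), i.e., ‖f‖_{L^p} ≤ C·(p-a)^{-(γ+1)} as p → a+ and ‖f‖_{L^p} ≤ C·(b-p)^{-(τ+1)} as p → b−. -/

import Mathlib

open MeasureTheory Set
open scoped ENNReal NNReal

lemma log_pow_le (y γ ε : ℝ) (hy : 1 ≤ y) (hγ : 0 ≤ γ) (hε : 0 < ε) :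
    Real.log y ^ γ ≤ (γ / ε) ^ γ * y ^ ε := by
  rcases eq_or_lt_of_le hγ with h0 | h0
  · rw [← h0, Real.rpow_zero, Real.rpow_zero, one_mul]
    exact Real.one_le_rpow hy hε.le
  · have hy0 : (0:ℝ) < y := lt_of_lt_of_le one_pos hy
    have hlog : 0 ≤ Real.log y := Real.log_nonneg hy
    have hεγ : 0 < ε / γ := div_pos hε h0
    have key : Real.log y ≤ γ / ε * y ^ (ε / γ) := by
      have hyp : 0 < y ^ (ε / γ) := Real.rpow_pos_of_pos hy0 _
      have h1 : Real.log (y ^ (ε / γ)) ≤ y ^ (ε / γ) :=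
        le_trans (Real.log_le_sub_one_of_pos hyp) (by linarith)
      have h2 : Real.log (y ^ (ε / γ)) = ε / γ * Real.log y := Real.log_rpow hy0 _
      calc Real.log y = γ / ε * (ε / γ * Real.log y) := by field_simp
        _ ≤ γ / ε * y ^ (ε / γ) := by
            rw [← h2]; exact mul_le_mul_of_nonneg_left h1 (by positivity)
    calc Real.log y ^ γ ≤ (γ / ε * y ^ (ε / γ)) ^ γ := Real.rpow_le_rpow hlog key hγ
      _ = (γ / ε) ^ γ * (y ^ (ε / γ)) ^ γ := Real.mul_rpow (by positivity) (by positivity)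
      _ = (γ / ε) ^ γ * y ^ ε := by
          rw [← Real.rpow_mul hy0.le, div_mul_cancel₀ _ h0.ne']

lemma lint_Ioc_le (s : ℝ) (hs : 0 < s) :
    ∫⁻ u in Ioc (0:ℝ) (1/2), ENNReal.ofReal (u ^ (s - 1)) ≤ ENNReal.ofReal (1 / s) := by
  have hInt : IntegrableOn (fun u : ℝ => u ^ (s - 1)) (Ioc (0:ℝ) (1/2)) volume :=
    (intervalIntegrable_iff_integrableOn_Ioc_of_le (by norm_num)).1
      (intervalIntegral.intervalIntegrable_rpow' (by linarith))
  have hnn : 0 ≤ᵐ[volume.restrict (Ioc (0:ℝ) (1/2))] fun u : ℝ => u ^ (s - 1) := by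
    filter_upwards [ae_restrict_mem measurableSet_Ioc] with u hu
    exact Real.rpow_nonneg hu.1.le _
  rw [← ofReal_integral_eq_lintegral_ofReal hInt hnn]
  apply ENNReal.ofReal_le_ofReal
  have hval : ∫ u in Ioc (0:ℝ) (1/2), u ^ (s - 1) = (1/2 : ℝ) ^ s / s := by
    rw [← intervalIntegral.integral_of_le (by norm_num : (0:ℝ) ≤ 1/2),
      integral_rpow (Or.inl (by linarith)), show s - 1 + 1 = s by ring,
      Real.zero_rpow hs.ne', sub_zero]
  rw [hval]
  gcongr
  exact Real.rpow_le_one (by norm_num) (by norm_num) hs.le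

lemma lint_Ioi_le (s : ℝ) (hs : 0 < s) :
    ∫⁻ u in Ioi (2:ℝ), ENNReal.ofReal (u ^ (-s - 1)) ≤ ENNReal.ofReal (1 / s) := by
  have hInt : IntegrableOn (fun u : ℝ => u ^ (-s - 1)) (Ioi (2:ℝ)) volume :=
    integrableOn_Ioi_rpow_of_lt (by linarith) (by norm_num)
  have hnn : 0 ≤ᵐ[volume.restrict (Ioi (2:ℝ))] fun u : ℝ => u ^ (-s - 1) := by
    filter_upwards [ae_restrict_mem measurableSet_Ioi] with u hu
    exact Real.rpow_nonneg (by have := mem_Ioi.mp hu; linarith) _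
  rw [← ofReal_integral_eq_lintegral_ofReal hInt hnn]
  apply ENNReal.ofReal_le_ofReal
  have hval : ∫ u in Ioi (2:ℝ), u ^ (-s - 1) = (2:ℝ) ^ (-s) / s := by
    rw [integral_Ioi_rpow_of_lt (by linarith) (by norm_num),
      show -s - 1 + 1 = -s by ring]
    field_simp
  rw [hval]
  gcongr
  exact Real.rpow_le_one_of_one_le_of_nonpos (by norm_num) (by linarith)

set_option maxHeartbeats 1000000 in
/-- Tail bounds `T(f,u) ≤ C₁ |log u|^γ u^{-a}` near `0` and
`T(f,u) ≤ C₂ (log u)^τ u^{-b}` near `∞` imply `f ∈ G(a,b; γ+1, τ+1)`. -/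
theorem tail_to_moment {X : Type*} [MeasurableSpace X] (μ : Measure X)
    (a b γ τ : ℝ) (ha : 1 ≤ a) (hab : a < b) (hγ : 0 ≤ γ) (hτ : 0 ≤ τ)
    (C₁ C₂ : ℝ) (hC₁ : 0 < C₁) (hC₂ : 0 < C₂)
    (f : X → ℝ) (hf : Measurable f)
    (htail₀ : ∀ u : ℝ, 0 < u → u ≤ 1 / 2 →
      μ {x | u < |f x|} ≤ ENNReal.ofReal (C₁ * |Real.log u| ^ γ * u ^ (-a)))
    (htailInf : ∀ u : ℝ, 2 ≤ u →
      μ {x | u < |f x|} ≤ ENNReal.ofReal (C₂ * (Real.log u) ^ τ * u ^ (-b))) :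
    ∃ C : ℝ, 0 < C ∧ ∀ p ∈ Set.Ioo a b,
      eLpNorm f (ENNReal.ofReal p) μ ≤
        ENNReal.ofReal (C * max ((p - a) ^ (-(γ + 1))) ((b - p) ^ (-(τ + 1)))) := by
  have hba : 0 < b - a := sub_pos.2 hab
  have hb0 : (0:ℝ) < b := by linarith
  set M : ℝ := C₁ * |Real.log (1/2)| ^ γ * (1/2 : ℝ) ^ (-a) * 2 ^ b * (2 - 1/2) with hMdef
  have hM0 : 0 ≤ M := by positivity
  set K₁ : ℝ := 2 * C₁ * (2 * γ) ^ γ with hK₁def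
  have hK₁0 : 0 ≤ K₁ := by positivity
  set K₂ : ℝ := 2 * C₂ * (2 * τ) ^ τ with hK₂def
  have hK₂0 : 0 ≤ K₂ := by positivity
  set G : ℝ := K₁ + M * (b - a) ^ (γ + 1) + K₂ with hGdef
  have hG0 : 0 ≤ G := by positivity
  refine ⟨(b - a) ^ (γ + 1) + b * G, by
    have := Real.rpow_pos_of_pos hba (γ + 1)
    nlinarith [mul_nonneg hb0.le hG0], ?_⟩
  rintro p ⟨hpa, hpb⟩
  have hp1 : 1 ≤ p := le_trans ha hpa.le
  have hp0 : 0 < p := by linarith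
  have hs₁ : 0 < p - a := by linarith
  have hs₂ : 0 < b - p := by linarith
  set R : ℝ := max ((p - a) ^ (-(γ + 1))) ((b - p) ^ (-(τ + 1))) with hRdef
  have hR1 : (p - a) ^ (-(γ + 1)) ≤ R := le_max_left _ _
  have hR2 : (b - p) ^ (-(τ + 1)) ≤ R := le_max_right _ _
  have hR0 : 0 < R := lt_of_lt_of_le (Real.rpow_pos_of_pos hs₁ _) hR1
  have h1a : 1 ≤ (b - a) ^ (γ + 1) * (p - a) ^ (-(γ + 1)) := by
    have hle : (p - a) ^ (γ + 1) ≤ (b - a) ^ (γ + 1) :=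
      Real.rpow_le_rpow hs₁.le (by linarith) (by positivity)
    rw [Real.rpow_neg hs₁.le, ← div_eq_mul_inv,
      le_div_iff₀ (Real.rpow_pos_of_pos hs₁ _), one_mul]
    exact hle
  -- Main integral bound
  have key : ∫⁻ x, (‖f x‖₊ : ℝ≥0∞) ^ p ∂μ ≤ ENNReal.ofReal (b * G * R) := by
    have habs : ∫⁻ x, (‖f x‖₊ : ℝ≥0∞) ^ p ∂μ = ∫⁻ x, ENNReal.ofReal (|f x| ^ p) ∂μ := by
      refine lintegral_congr fun x => ?_
      rw [← ENNReal.ofReal_rpow_of_nonneg (abs_nonneg _) hp0.le, ← Real.norm_eq_abs,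
        show ENNReal.ofReal ‖f x‖ = (‖f x‖₊ : ℝ≥0∞) from ofReal_norm _]
    have hlc := lintegral_rpow_eq_lintegral_meas_lt_mul μ (f := fun x => |f x|)
      (Filter.Eventually.of_forall fun x => abs_nonneg (f x)) hf.abs.aemeasurable hp0
    beta_reduce at hlc
    rw [habs, hlc]
    -- piece 1
    have hI₁ : ∫⁻ t in Ioc (0:ℝ) (1/2),
        μ {x | t < |f x|} * ENNReal.ofReal (t ^ (p - 1))
        ≤ ENNReal.ofReal (K₁ * (p - a) ^ (-(γ + 1))) := by
      set A : ℝ := C₁ * (2 * γ / (p - a)) ^ γ with hA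
      have hA0 : 0 ≤ A := by positivity
      have hmono : ∀ t ∈ Ioc (0:ℝ) (1/2),
          μ {x | t < |f x|} * ENNReal.ofReal (t ^ (p - 1))
          ≤ ENNReal.ofReal (A * t ^ ((p - a)/2 - 1)) := by
        rintro t ⟨ht0, ht2⟩
        refine le_trans (mul_le_mul_left (htail₀ t ht0 ht2) _) ?_
        rw [← ENNReal.ofReal_mul (by positivity)]
        apply ENNReal.ofReal_le_ofReal
        have hlogt : |Real.log t| ^ γ ≤ (γ / ((p - a)/2)) ^ γ * t ^ (-((p - a)/2)) := by
          have hinv : 1 ≤ t⁻¹ := (one_le_inv_iff₀.mpr ⟨ht0, by linarith⟩)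
          have h := log_pow_le t⁻¹ γ ((p - a)/2) hinv hγ (by linarith)
          rw [Real.log_inv] at h
          rw [abs_of_neg (Real.log_neg ht0 (by linarith))]
          calc (-Real.log t) ^ γ ≤ (γ/((p - a)/2)) ^ γ * t⁻¹ ^ ((p - a)/2) := h
            _ = (γ/((p - a)/2)) ^ γ * t ^ (-((p - a)/2)) := by
                rw [Real.inv_rpow ht0.le, ← Real.rpow_neg ht0.le]
        calc C₁ * |Real.log t| ^ γ * t ^ (-a) * t ^ (p - 1)
            ≤ C₁ * ((γ/((p - a)/2)) ^ γ * t ^ (-((p - a)/2))) * t ^ (-a) * t ^ (p - 1) := by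
              gcongr
          _ = A * t ^ ((p - a)/2 - 1) := by
              rw [hA, show γ / ((p - a)/2) = 2 * γ / (p - a) by rw [div_div_eq_mul_div]; ring]
              rw [show C₁ * ((2 * γ / (p - a)) ^ γ * t ^ (-((p - a)/2))) * t ^ (-a) * t ^ (p - 1)
                  = C₁ * (2 * γ / (p - a)) ^ γ * (t ^ (-((p - a)/2)) * t ^ (-a) * t ^ (p - 1)) by ring]
              rw [← Real.rpow_add ht0, ← Real.rpow_add ht0]
              congr 1
              ring
      refine le_trans (setLIntegral_mono (by fun_prop) hmono) ?_
      calc ∫⁻ t in Ioc (0:ℝ) (1/2), ENNReal.ofReal (A * t ^ ((p - a)/2 - 1))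
          = ENNReal.ofReal A * ∫⁻ t in Ioc (0:ℝ) (1/2), ENNReal.ofReal (t ^ ((p - a)/2 - 1)) := by
            simp_rw [ENNReal.ofReal_mul hA0]
            exact lintegral_const_mul' _ _ ENNReal.ofReal_ne_top
        _ ≤ ENNReal.ofReal A * ENNReal.ofReal (1 / ((p - a)/2)) :=
            mul_le_mul_right (lint_Ioc_le _ (by linarith)) _
        _ = ENNReal.ofReal (A * (1 / ((p - a)/2))) := (ENNReal.ofReal_mul hA0).symm
        _ ≤ ENNReal.ofReal (K₁ * (p - a) ^ (-(γ + 1))) := by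
            apply ENNReal.ofReal_le_ofReal
            have e1 : (2 * γ / (p - a)) ^ γ = (2 * γ) ^ γ / (p - a) ^ γ :=
              Real.div_rpow (by positivity) hs₁.le γ
            have e2 : (p - a) ^ (-(γ + 1)) = ((p - a) ^ γ * (p - a))⁻¹ := by
              rw [Real.rpow_neg hs₁.le, Real.rpow_add hs₁, Real.rpow_one]
            have h3 : (0:ℝ) < (p - a) ^ γ := Real.rpow_pos_of_pos hs₁ _
            rw [hA, hK₁def, e1, e2]
            rw [div_eq_mul_inv, div_eq_mul_inv]
            have h4 : (0:ℝ) ≤ (2 * γ) ^ γ := by positivity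
            apply le_of_eq
            field_simp
    -- piece 2
    have hI₂ : ∫⁻ t in Ioc (1/2:ℝ) 2,
        μ {x | t < |f x|} * ENNReal.ofReal (t ^ (p - 1)) ≤ ENNReal.ofReal M := by
      have hmono : ∀ t ∈ Ioc (1/2:ℝ) 2,
          μ {x | t < |f x|} * ENNReal.ofReal (t ^ (p - 1))
          ≤ ENNReal.ofReal (C₁ * |Real.log (1/2)| ^ γ * (1/2:ℝ) ^ (-a) * 2 ^ b) := by
        rintro t ⟨ht1, ht2⟩
        have h1 : μ {x | t < |f x|}
            ≤ ENNReal.ofReal (C₁ * |Real.log (1/2)| ^ γ * (1/2:ℝ) ^ (-a)) := by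
          refine le_trans (measure_mono fun x hx => ?_) (htail₀ (1/2) (by norm_num) le_rfl)
          exact lt_trans ht1 hx
        have h2 : ENNReal.ofReal (t ^ (p - 1)) ≤ ENNReal.ofReal ((2:ℝ) ^ b) := by
          apply ENNReal.ofReal_le_ofReal
          calc t ^ (p - 1) ≤ (2:ℝ) ^ (p - 1) :=
              Real.rpow_le_rpow (by linarith) ht2 (by linarith)
            _ ≤ (2:ℝ) ^ b := Real.rpow_le_rpow_of_exponent_le one_le_two (by linarith)
        calc μ {x | t < |f x|} * ENNReal.ofReal (t ^ (p - 1))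
            ≤ ENNReal.ofReal (C₁ * |Real.log (1/2)| ^ γ * (1/2:ℝ) ^ (-a))
              * ENNReal.ofReal ((2:ℝ) ^ b) := mul_le_mul' h1 h2
          _ = ENNReal.ofReal (C₁ * |Real.log (1/2)| ^ γ * (1/2:ℝ) ^ (-a) * 2 ^ b) :=
              (ENNReal.ofReal_mul (by positivity)).symm
      refine le_trans (setLIntegral_mono measurable_const hmono) ?_
      rw [setLIntegral_const, Real.volume_Ioc, ← ENNReal.ofReal_mul (by positivity)]
    -- piece 3
    have hI₃ : ∫⁻ t in Ioi (2:ℝ),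
        μ {x | t < |f x|} * ENNReal.ofReal (t ^ (p - 1))
        ≤ ENNReal.ofReal (K₂ * (b - p) ^ (-(τ + 1))) := by
      set B : ℝ := C₂ * (2 * τ / (b - p)) ^ τ with hB
      have hB0 : 0 ≤ B := by positivity
      have hmono : ∀ t ∈ Ioi (2:ℝ),
          μ {x | t < |f x|} * ENNReal.ofReal (t ^ (p - 1))
          ≤ ENNReal.ofReal (B * t ^ (-((b - p)/2) - 1)) := by
        intro t ht
        have ht2 : (2:ℝ) < t := mem_Ioi.mp ht
        have ht0 : (0:ℝ) < t := by linarith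
        refine le_trans (mul_le_mul_left (htailInf t ht2.le) _) ?_
        rw [← ENNReal.ofReal_mul (mul_nonneg (mul_nonneg hC₂.le
          (Real.rpow_nonneg (Real.log_nonneg (by linarith)) _)) (Real.rpow_nonneg ht0.le _))]
        apply ENNReal.ofReal_le_ofReal
        have hlogt : Real.log t ^ τ ≤ (τ / ((b - p)/2)) ^ τ * t ^ ((b - p)/2) :=
          log_pow_le t τ ((b - p)/2) (by linarith) hτ (by linarith)
        calc C₂ * Real.log t ^ τ * t ^ (-b) * t ^ (p - 1)
            ≤ C₂ * ((τ/((b - p)/2)) ^ τ * t ^ ((b - p)/2)) * t ^ (-b) * t ^ (p - 1) := by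
              gcongr
          _ = B * t ^ (-((b - p)/2) - 1) := by
              rw [hB, show τ / ((b - p)/2) = 2 * τ / (b - p) by rw [div_div_eq_mul_div]; ring]
              rw [show C₂ * ((2 * τ / (b - p)) ^ τ * t ^ ((b - p)/2)) * t ^ (-b) * t ^ (p - 1)
                  = C₂ * (2 * τ / (b - p)) ^ τ * (t ^ ((b - p)/2) * t ^ (-b) * t ^ (p - 1)) by ring]
              rw [← Real.rpow_add ht0, ← Real.rpow_add ht0]
              congr 1
              ring
      refine le_trans (setLIntegral_mono (by fun_prop) hmono) ?_
      calc ∫⁻ t in Ioi (2:ℝ), ENNReal.ofReal (B * t ^ (-((b - p)/2) - 1))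
          = ENNReal.ofReal B * ∫⁻ t in Ioi (2:ℝ), ENNReal.ofReal (t ^ (-((b - p)/2) - 1)) := by
            simp_rw [ENNReal.ofReal_mul hB0]
            exact lintegral_const_mul' _ _ ENNReal.ofReal_ne_top
        _ ≤ ENNReal.ofReal B * ENNReal.ofReal (1 / ((b - p)/2)) :=
            mul_le_mul_right (lint_Ioi_le _ (by linarith)) _
        _ = ENNReal.ofReal (B * (1 / ((b - p)/2))) := (ENNReal.ofReal_mul hB0).symm
        _ ≤ ENNReal.ofReal (K₂ * (b - p) ^ (-(τ + 1))) := by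
            apply ENNReal.ofReal_le_ofReal
            have e1 : (2 * τ / (b - p)) ^ τ = (2 * τ) ^ τ / (b - p) ^ τ :=
              Real.div_rpow (by positivity) hs₂.le τ
            have e2 : (b - p) ^ (-(τ + 1)) = ((b - p) ^ τ * (b - p))⁻¹ := by
              rw [Real.rpow_neg hs₂.le, Real.rpow_add hs₂, Real.rpow_one]
            have h3 : (0:ℝ) < (b - p) ^ τ := Real.rpow_pos_of_pos hs₂ _
            rw [hB, hK₂def, e1, e2]
            rw [div_eq_mul_inv, div_eq_mul_inv]
            apply le_of_eq
            field_simp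
    -- combine
    have hsplit : ∫⁻ t in Ioi (0:ℝ), μ {x | t < |f x|} * ENNReal.ofReal (t ^ (p - 1))
        = (∫⁻ t in Ioc (0:ℝ) (1/2), μ {x | t < |f x|} * ENNReal.ofReal (t ^ (p - 1)))
          + ((∫⁻ t in Ioc (1/2:ℝ) 2, μ {x | t < |f x|} * ENNReal.ofReal (t ^ (p - 1)))
          + ∫⁻ t in Ioi (2:ℝ), μ {x | t < |f x|} * ENNReal.ofReal (t ^ (p - 1))) := by
      rw [← Ioc_union_Ioi_eq_Ioi (show (0:ℝ) ≤ 1/2 by norm_num),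
        ← Ioc_union_Ioi_eq_Ioi (show (1/2:ℝ) ≤ 2 by norm_num),
        lintegral_union (measurableSet_Ioc.union measurableSet_Ioi) ?_,
        lintegral_union measurableSet_Ioi ?_]
      · rw [Set.disjoint_left]
        rintro x ⟨_, hx⟩ hx'
        exact absurd (mem_Ioi.mp hx') (not_lt.2 hx)
      · rw [Set.disjoint_left]
        rintro x ⟨_, hx⟩ (⟨hx', _⟩ | hx')
        · exact absurd hx' (not_lt.2 hx)
        · exact absurd (mem_Ioi.mp hx') (not_lt.2 (by linarith))
    rw [hsplit]
    have hsum : K₁ * (p - a) ^ (-(γ + 1)) + (M + K₂ * (b - p) ^ (-(τ + 1))) ≤ G * R := by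
      have e1 : K₁ * (p - a) ^ (-(γ + 1)) ≤ K₁ * R := mul_le_mul_of_nonneg_left hR1 hK₁0
      have e2 : K₂ * (b - p) ^ (-(τ + 1)) ≤ K₂ * R := mul_le_mul_of_nonneg_left hR2 hK₂0
      have e3 : M ≤ M * (b - a) ^ (γ + 1) * R := by
        calc M = M * 1 := (mul_one M).symm
          _ ≤ M * ((b - a) ^ (γ + 1) * (p - a) ^ (-(γ + 1))) :=
              mul_le_mul_of_nonneg_left h1a hM0
          _ ≤ M * ((b - a) ^ (γ + 1) * R) := by
              have := mul_le_mul_of_nonneg_left hR1 (by positivity : (0:ℝ) ≤ (b - a) ^ (γ + 1))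
              exact mul_le_mul_of_nonneg_left this hM0
          _ = M * (b - a) ^ (γ + 1) * R := by ring
      calc K₁ * (p - a) ^ (-(γ + 1)) + (M + K₂ * (b - p) ^ (-(τ + 1)))
          ≤ K₁ * R + (M * (b - a) ^ (γ + 1) * R + K₂ * R) := by linarith
        _ = G * R := by rw [hGdef]; ring
    calc ENNReal.ofReal p *
        ((∫⁻ t in Ioc (0:ℝ) (1/2), μ {x | t < |f x|} * ENNReal.ofReal (t ^ (p - 1)))
          + ((∫⁻ t in Ioc (1/2:ℝ) 2, μ {x | t < |f x|} * ENNReal.ofReal (t ^ (p - 1)))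
          + ∫⁻ t in Ioi (2:ℝ), μ {x | t < |f x|} * ENNReal.ofReal (t ^ (p - 1))))
        ≤ ENNReal.ofReal p * (ENNReal.ofReal (K₁ * (p - a) ^ (-(γ + 1)))
            + (ENNReal.ofReal M + ENNReal.ofReal (K₂ * (b - p) ^ (-(τ + 1))))) :=
          mul_le_mul_right (add_le_add hI₁ (add_le_add hI₂ hI₃)) _
      _ = ENNReal.ofReal p * ENNReal.ofReal
            (K₁ * (p - a) ^ (-(γ + 1)) + (M + K₂ * (b - p) ^ (-(τ + 1)))) := by
          rw [← ENNReal.ofReal_add hM0 (by positivity),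
            ← ENNReal.ofReal_add (by positivity) (by positivity)]
      _ = ENNReal.ofReal (p * (K₁ * (p - a) ^ (-(γ + 1)) + (M + K₂ * (b - p) ^ (-(τ + 1))))) :=
          (ENNReal.ofReal_mul hp0.le).symm
      _ ≤ ENNReal.ofReal (b * G * R) := by
          apply ENNReal.ofReal_le_ofReal
          have hnn : 0 ≤ K₁ * (p - a) ^ (-(γ + 1)) + (M + K₂ * (b - p) ^ (-(τ + 1))) :=
            add_nonneg (mul_nonneg hK₁0 (Real.rpow_nonneg hs₁.le _))
              (add_nonneg hM0 (mul_nonneg hK₂0 (Real.rpow_nonneg hs₂.le _)))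
          calc p * (K₁ * (p - a) ^ (-(γ + 1)) + (M + K₂ * (b - p) ^ (-(τ + 1))))
              ≤ b * (G * R) := mul_le_mul hpb.le hsum hnn hb0.le
            _ = b * G * R := by ring
  -- conclude
  rw [eLpNorm_eq_lintegral_rpow_enorm_toReal
      (by simp only [ne_eq, ENNReal.ofReal_eq_zero, not_le]; exact hp0) ENNReal.ofReal_ne_top,
    ENNReal.toReal_ofReal hp0.le]
  have h1 : 1 ≤ ((b - a) ^ (γ + 1) + b * G) * R := by
    have h2 : (b - a) ^ (γ + 1) * (p - a) ^ (-(γ + 1)) ≤ (b - a) ^ (γ + 1) * R :=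
      mul_le_mul_of_nonneg_left hR1 (by positivity)
    nlinarith [mul_nonneg (mul_nonneg hb0.le hG0) hR0.le]
  calc (∫⁻ x, (‖f x‖₊ : ℝ≥0∞) ^ p ∂μ) ^ (1 / p)
      ≤ (ENNReal.ofReal (b * G * R)) ^ (1 / p) := ENNReal.rpow_le_rpow key (by positivity)
    _ ≤ ENNReal.ofReal (((b - a) ^ (γ + 1) + b * G) * R) := by
        rcases le_total (ENNReal.ofReal (b * G * R)) 1 with h | h
        · calc (ENNReal.ofReal (b * G * R)) ^ (1 / p) ≤ (1:ℝ≥0∞) ^ (1 / p) :=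
              ENNReal.rpow_le_rpow h (by positivity)
            _ = 1 := ENNReal.one_rpow _
            _ ≤ ENNReal.ofReal (((b - a) ^ (γ + 1) + b * G) * R) := ENNReal.one_le_ofReal.2 h1
        · calc (ENNReal.ofReal (b * G * R)) ^ (1 / p)
              ≤ (ENNReal.ofReal (b * G * R)) ^ (1:ℝ) :=
              ENNReal.rpow_le_rpow_of_exponent_le h ((div_le_one hp0).2 hp1)
            _ = ENNReal.ofReal (b * G * R) := ENNReal.rpow_one _
            _ ≤ ENNReal.ofReal (((b - a) ^ (γ + 1) + b * G) * R) := by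
                apply ENNReal.ofReal_le_ofReal
                nlinarith [mul_nonneg (Real.rpow_pos_of_pos hba (γ + 1)).le hR0.le]
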